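/- The comaximal graph of the Heisenberg Lie algebra H₃(F_q) with its unique isolated vertex removed is a (q²+q)-regular graph on (q+1)² vertices. -/

import Mathlib

open Module

section Aux

variable {F : Type*} [Field F] {H : Type*} [LieRing H] [LieAlgebra F H]

/-- A one-dimensional (or zero) subspace is always a Lie subalgebra. -/
def lineAlg (F : Type*) [Field F] {H : Type*} [LieRing H] [LieAlgebra F H] (v : H) :
    LieSubalgebra F H :=
  { carrier := Submodule.span F {v}
    add_mem' := fun ha hb => add_mem ha hb
    zero_mem' := zero_mem _
    smul_mem' := fun c _ ha => Submodule.smul_mem _ c ha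
    lie_mem' := by
      intro x y hx hy
      simp only [SetLike.mem_coe, Submodule.mem_span_singleton] at *
      obtain ⟨a, rfl⟩ := hx; obtain ⟨b, rfl⟩ := hy
      exact ⟨0, by simp⟩ }

@[simp] theorem lineAlg_toSubmodule (v : H) :
    ((lineAlg F v : LieSubalgebra F H) : Submodule F H) = Submodule.span F {v} := rfl

theorem mem_lineAlg {v x : H} : x ∈ lineAlg F v ↔ ∃ c : F, c • v = x :=
  Submodule.mem_span_singleton

/-- Generic counting principle. -/
theorem card_split {α : Type*} [Finite α] (p q : α → Prop) :
    Nat.card {x // p x} = Nat.card {x // p x ∧ q x} + Nat.card {x // p x ∧ ¬ q x} := by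
  classical
  rw [← Nat.card_sum]
  exact (Nat.card_congr (((Equiv.subtypeSubtypeEquivSubtypeInter p q).symm.sumCongr
    (Equiv.subtypeSubtypeEquivSubtypeInter p (fun x => ¬ q x)).symm).trans
    (Equiv.sumCompl (fun x : {x // p x} => q x.1)))).symm

end Aux

/-- All the data of a Heisenberg basis. -/
structure HS (F : Type*) [Field F] (H : Type*) [LieRing H] [LieAlgebra F H] where
  e : H
  f : H
  h : H
  hspan : Submodule.span F {e, f, h} = ⊤
  hdim : finrank F H = 3
  hef : ⁅e, f⁆ = h
  heh : ⁅e, h⁆ = 0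
  hfh : ⁅f, h⁆ = 0

namespace HS

variable {F : Type*} [Field F] {H : Type*} [LieRing H] [LieAlgebra F H] (S : HS F H)

include S in
theorem fd : FiniteDimensional F H :=
  ⟨Submodule.fg_def.mpr ⟨{S.e, S.f, S.h}, Set.toFinite _, S.hspan⟩⟩

theorem li : LinearIndependent F ![S.e, S.f, S.h] := by
  have := S.fd
  apply linearIndependent_of_top_le_span_of_card_eq_finrank
  · rw [show Set.range ![S.e, S.f, S.h] = {S.e, S.f, S.h} by
      simp [Matrix.range_cons, Matrix.range_empty, Set.insert_comm]; ext x; simp; tauto, S.hspan]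
  · simp [S.hdim]

theorem combo_eq_zero {α β γ : F} (hz : α • S.e + β • S.f + γ • S.h = 0) :
    α = 0 ∧ β = 0 ∧ γ = 0 := by
  have h0 := Fintype.linearIndependent_iff.mp S.li ![α, β, γ] ?_
  · exact ⟨h0 0, h0 1, h0 2⟩
  · simpa [Fin.sum_univ_three, add_assoc] using hz

theorem exists_combo (x : H) : ∃ α β γ : F, x = α • S.e + β • S.f + γ • S.h := by
  have hx : x ∈ Submodule.span F ({S.e, S.f, S.h} : Set H) := by rw [S.hspan]; trivial
  rw [Submodule.mem_span_insert] at hx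
  obtain ⟨α, z, hz, rfl⟩ := hx
  rw [Submodule.mem_span_insert] at hz
  obtain ⟨β, w, hw, rfl⟩ := hz
  rw [Submodule.mem_span_singleton] at hw
  obtain ⟨γ, rfl⟩ := hw
  exact ⟨α, β, γ, by abel⟩

theorem bracket_formula (α₁ β₁ γ₁ α₂ β₂ γ₂ : F) :
    ⁅α₁ • S.e + β₁ • S.f + γ₁ • S.h, α₂ • S.e + β₂ • S.f + γ₂ • S.h⁆
      = (α₁ * β₂ - β₁ * α₂) • S.h := by
  have hfe : ⁅S.f, S.e⁆ = -S.h := by rw [← lie_skew, S.hef]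
  have hhe : ⁅S.h, S.e⁆ = 0 := by rw [← lie_skew, S.heh, neg_zero]
  have hhf : ⁅S.h, S.f⁆ = 0 := by rw [← lie_skew, S.hfh, neg_zero]
  simp only [lie_add, add_lie, lie_smul, smul_lie, S.hef, S.heh, S.hfh, hfe, hhe, hhf,
    lie_self, smul_zero, zero_add, add_zero, smul_neg, sub_smul, mul_smul]
  module

theorem hne : S.h ≠ 0 := by
  intro h0
  have := S.combo_eq_zero (α := 0) (β := 0) (γ := 1) (by simp [h0])
  simpa using this.2.2

/-- The span of the center element. -/
abbrev sh : Submodule F H := Submodule.span F {S.h}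

theorem bracket_mem (x y : H) : ⁅x, y⁆ ∈ S.sh := by
  obtain ⟨a, b, c, rfl⟩ := S.exists_combo x
  obtain ⟨a', b', c', rfl⟩ := S.exists_combo y
  rw [S.bracket_formula]
  exact Submodule.smul_mem _ _ (Submodule.mem_span_singleton_self _)

/-- Any submodule containing `h` is a Lie subalgebra. -/
def ofSubmodule (W : Submodule F H) (hW : S.h ∈ W) : LieSubalgebra F H :=
  { carrier := W
    add_mem' := fun ha hb => add_mem ha hb
    zero_mem' := zero_mem _
    smul_mem' := fun c _ ha => Submodule.smul_mem _ c ha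
    lie_mem' := fun {x y} _ _ =>
      (Submodule.span_le.mpr (by simpa using hW)) (S.bracket_mem x y) }

@[simp] theorem ofSubmodule_toSubmodule (W : Submodule F H) (hW : S.h ∈ W) :
    ((S.ofSubmodule W hW : LieSubalgebra F H) : Submodule F H) = W := rfl

/-- The plane spanned by `x` and `h`. -/
def plane (x : H) : LieSubalgebra F H :=
  S.ofSubmodule (Submodule.span F {x, S.h}) (Submodule.subset_span (by simp))

@[simp] theorem plane_toSubmodule (x : H) :
    ((S.plane x : LieSubalgebra F H) : Submodule F H) = Submodule.span F {x, S.h} := rfl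

theorem Z_eq : LieSubalgebra.lieSpan F H {S.h} = lineAlg F S.h := by
  apply le_antisymm
  · exact LieSubalgebra.lieSpan_le.mpr (by
      intro x hx
      simp only [Set.mem_singleton_iff] at hx
      subst hx
      exact mem_lineAlg.mpr ⟨1, one_smul _ _⟩)
  · intro x hx
    have hx' : x ∈ Submodule.span F {S.h} := hx
    have : Submodule.span F {S.h} ≤ (LieSubalgebra.lieSpan F H {S.h} : Submodule F H) :=
      Submodule.span_le.mpr (by
        intro y hy
        simp only [Set.mem_singleton_iff] at hy
        subst hy
        exact LieSubalgebra.subset_lieSpan rfl)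
    exact this hx'

@[simp] theorem Z_toSubmodule :
    ((LieSubalgebra.lieSpan F H {S.h} : LieSubalgebra F H) : Submodule F H) = S.sh := by
  rw [S.Z_eq]; rfl

end HS

namespace HS
variable {F : Type*} [Field F] {H : Type*} [LieRing H] [LieAlgebra F H] (S : HS F H)

theorem finrank_sh : finrank F S.sh = 1 := finrank_span_singleton S.hne

theorem pair_indep {x : H} (hx : x ∉ S.sh) {s t : F} (hst : s • x + t • S.h = 0) :
    s = 0 ∧ t = 0 := by
  have hs : s = 0 := by
    by_contra hs
    apply hx
    rw [Submodule.mem_span_singleton]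
    refine ⟨-(s⁻¹ * t), ?_⟩
    have : x = s⁻¹ • (s • x) := by rw [smul_smul, inv_mul_cancel₀ hs, one_smul]
    rw [this, show s • x = -(t • S.h) by linear_combination (norm := module) hst]
    module
  subst hs
  rw [zero_smul, zero_add] at hst
  exact ⟨rfl, by
    by_contra ht
    exact S.hne (by simpa [smul_eq_zero, ht] using hst)⟩

theorem pair_li {x : H} (hx : x ∉ S.sh) : LinearIndependent F ![x, S.h] :=
  LinearIndependent.pair_iff.mpr fun s t hst => S.pair_indep hx hst

theorem finrank_plane {x : H} (hx : x ∉ S.sh) :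
    finrank F (Submodule.span F {x, S.h}) = 2 := by
  have : ({x, S.h} : Set H) = Set.range ![x, S.h] := by
    ext z; simp [Fin.exists_fin_two]; tauto
  rw [this, finrank_span_eq_card (S.pair_li hx)]
  simp

theorem exists_bracket_h (W : Submodule F H) (hW : W ⊔ S.sh = ⊤) :
    ∃ a ∈ W, ∃ b ∈ W, ⁅a, b⁆ = S.h := by
  have he : S.e ∈ W ⊔ S.sh := by rw [hW]; trivial
  have hf : S.f ∈ W ⊔ S.sh := by rw [hW]; trivial
  rw [Submodule.mem_sup] at he hf
  obtain ⟨a, ha, z, hz, hze⟩ := he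
  obtain ⟨b, hb, w, hw, hwf⟩ := hf
  rw [Submodule.mem_span_singleton] at hz hw
  obtain ⟨γ, rfl⟩ := hz
  obtain ⟨δ, rfl⟩ := hw
  refine ⟨a, ha, b, hb, ?_⟩
  have ha' : a = (1 : F) • S.e + (0 : F) • S.f + (-γ) • S.h := by
    rw [← hze]; module
  have hb' : b = (0 : F) • S.e + (1 : F) • S.f + (-δ) • S.h := by
    rw [← hwf]; module
  rw [ha', hb', S.bracket_formula]
  simp

theorem sup_eq_top_iff (A B : LieSubalgebra F H) :
    A ⊔ B = ⊤ ↔ (A : Submodule F H) ⊔ (B : Submodule F H) ⊔ S.sh = ⊤ := by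
  constructor
  · intro htop
    have hhC : S.h ∈ (A : Submodule F H) ⊔ (B : Submodule F H) ⊔ S.sh :=
      Submodule.mem_sup_right (Submodule.mem_span_singleton_self _)
    set C := S.ofSubmodule ((A : Submodule F H) ⊔ (B : Submodule F H) ⊔ S.sh) hhC with hC
    have hAC : A ≤ C := fun x hx => by
      exact (le_sup_left.trans le_sup_left :
        (A : Submodule F H) ≤ (A : Submodule F H) ⊔ (B : Submodule F H) ⊔ S.sh) hx
    have hBC : B ≤ C := fun x hx => by
      exact (le_sup_right.trans le_sup_left :
        (B : Submodule F H) ≤ (A : Submodule F H) ⊔ (B : Submodule F H) ⊔ S.sh) hx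
    have : (⊤ : LieSubalgebra F H) ≤ C := htop ▸ sup_le hAC hBC
    refine top_unique ?_
    intro x _
    exact this (LieSubalgebra.mem_top x)
  · intro hsub
    set W := ((A ⊔ B : LieSubalgebra F H) : Submodule F H) with hWdef
    have hAW : (A : Submodule F H) ≤ W := fun x hx => (le_sup_left : A ≤ A ⊔ B) hx
    have hBW : (B : Submodule F H) ≤ W := fun x hx => (le_sup_right : B ≤ A ⊔ B) hx
    have hWs : W ⊔ S.sh = ⊤ := top_unique (by
      rw [← hsub]
      exact sup_le (sup_le (hAW.trans le_sup_left) (hBW.trans le_sup_left)) le_sup_right)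
    obtain ⟨a, ha, b, hb, hab⟩ := S.exists_bracket_h W hWs
    have hhW : S.h ∈ A ⊔ B := hab ▸ (A ⊔ B).lie_mem ha hb
    have hshW : S.sh ≤ W := Submodule.span_le.mpr (Set.singleton_subset_iff.mpr hhW)
    have : W = ⊤ := by rw [← hWs, sup_eq_left.mpr hshW]
    rw [← LieSubalgebra.toSubmodule_inj, LieSubalgebra.top_toSubmodule]
    exact this

theorem h_mem_of_finrank2 (A : LieSubalgebra F H)
    (h2 : finrank F (A : Submodule F H) = 2) : S.h ∈ A := by
  have := S.fd
  by_cases hh : S.h ∈ A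
  · exact hh
  · exfalso
    have hinf : (A : Submodule F H) ⊓ S.sh = ⊥ := by
      rw [eq_bot_iff]
      intro x hx
      rw [Submodule.mem_inf] at hx
      obtain ⟨hxA, hxs⟩ := hx
      rw [Submodule.mem_span_singleton] at hxs
      obtain ⟨c, rfl⟩ := hxs
      rcases eq_or_ne c 0 with rfl | hc
      · simp
      · exact absurd (by
          have : S.h = c⁻¹ • (c • S.h) := by rw [smul_smul, inv_mul_cancel₀ hc, one_smul]
          rw [this]
          exact A.smul_mem _ hxA) hh
    have hsup : (A : Submodule F H) ⊔ S.sh = ⊤ := by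
      apply Submodule.eq_top_of_finrank_eq
      have := Submodule.finrank_sup_add_finrank_inf_eq (A : Submodule F H) S.sh
      rw [hinf, h2, S.finrank_sh, finrank_bot] at this
      rw [S.hdim]
      omega
    obtain ⟨a, ha, b, hb, hab⟩ := S.exists_bracket_h _ hsup
    exact hh (hab ▸ A.lie_mem ha hb)

end HS

namespace HS
variable {F : Type*} [Field F] {H : Type*} [LieRing H] [LieAlgebra F H] (S : HS F H)

include S in
theorem ne_top_of_finrank {A : LieSubalgebra F H} {n : ℕ}
    (hA : finrank F (A : Submodule F H) = n) (hn : n ≠ 3) : A ≠ ⊤ := by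
  rintro rfl
  rw [LieSubalgebra.top_toSubmodule, finrank_top, S.hdim] at hA
  exact hn hA.symm

theorem ne_bot_of_finrank {A : LieSubalgebra F H} {n : ℕ}
    (hA : finrank F (A : Submodule F H) = n) (hn : n ≠ 0) : A ≠ ⊥ := by
  rintro rfl
  rw [LieSubalgebra.bot_toSubmodule, finrank_bot] at hA
  exact hn hA.symm

include S in
theorem finrank_mem_of_vertex {A : LieSubalgebra F H} (h1 : A ≠ ⊥) (h2 : A ≠ ⊤) :
    finrank F (A : Submodule F H) = 1 ∨ finrank F (A : Submodule F H) = 2 := by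
  have := S.fd
  have hb : (A : Submodule F H) ≠ ⊥ := by
    intro hbot
    exact h1 (by rw [← LieSubalgebra.toSubmodule_inj, hbot,
      LieSubalgebra.bot_toSubmodule])
  have ht : (A : Submodule F H) ≠ ⊤ := by
    intro htop
    exact h2 (by rw [← LieSubalgebra.toSubmodule_inj, htop,
      LieSubalgebra.top_toSubmodule])
  have hpos : finrank F (A : Submodule F H) ≠ 0 := by
    intro h0
    exact hb (Submodule.finrank_eq_zero.mp h0)
  have hlt : finrank F (A : Submodule F H) < 3 := by
    have := Submodule.finrank_lt (K := F) (V := H) ht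
    rwa [S.hdim] at this
  omega

include S in
theorem line_norm {A : LieSubalgebra F H} (h1 : finrank F (A : Submodule F H) = 1) :
    ∃ v : H, v ≠ 0 ∧ A = lineAlg F v := by
  have := S.fd
  have hb : (A : Submodule F H) ≠ ⊥ := by
    intro hbot; rw [hbot, finrank_bot] at h1; omega
  obtain ⟨v, hvA, hv0⟩ := Submodule.exists_mem_ne_zero_of_ne_bot hb
  refine ⟨v, hv0, ?_⟩
  apply LieSubalgebra.toSubmodule_injective
  rw [lineAlg_toSubmodule]
  exact (Submodule.eq_of_le_of_finrank_eq
    (Submodule.span_le.mpr (by simpa using hvA))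
    (by rw [finrank_span_singleton hv0, h1])).symm

theorem lineAlg_smul {c : F} (hc : c ≠ 0) (v : H) : lineAlg F (c • v) = lineAlg F v :=
  LieSubalgebra.toSubmodule_injective
    (by rw [lineAlg_toSubmodule, lineAlg_toSubmodule]
        exact Submodule.span_singleton_smul_eq (isUnit_iff_ne_zero.mpr hc) v)

theorem plane_norm {A : LieSubalgebra F H} (h2 : finrank F (A : Submodule F H) = 2) :
    (∃ c : F, A = S.plane (S.e + c • S.f)) ∨ A = S.plane S.f := by
  have := S.fd
  have hhA : S.h ∈ A := S.h_mem_of_finrank2 A h2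
  have hsle : S.sh ≤ (A : Submodule F H) := Submodule.span_le.mpr (by simpa using hhA)
  have hslt : S.sh < (A : Submodule F H) := by
    refine lt_of_le_of_ne hsle ?_
    intro heq
    rw [← heq, S.finrank_sh] at h2
    omega
  obtain ⟨x, hxA, hxs⟩ := SetLike.exists_of_lt hslt
  have key : ∀ y : H, y ∈ A → y ∉ S.sh → A = S.plane y := by
    intro y hy hys
    apply LieSubalgebra.toSubmodule_injective
    rw [plane_toSubmodule]
    exact (Submodule.eq_of_le_of_finrank_eq
      (Submodule.span_le.mpr (by
        rintro z (rfl | rfl)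
        · exact hy
        · exact hhA))
      (by rw [S.finrank_plane hys, h2])).symm
  obtain ⟨α, β, γ, hx⟩ := S.exists_combo x
  rcases eq_or_ne α 0 with rfl | hα
  · rcases eq_or_ne β 0 with rfl | hβ
    · exfalso
      apply hxs
      rw [Submodule.mem_span_singleton]
      exact ⟨γ, by rw [hx]; module⟩
    · right
      apply key S.f ?_ ?_
      · have : S.f = β⁻¹ • x + (-(β⁻¹ * γ)) • S.h := by
          rw [hx, smul_add, smul_add, smul_smul, smul_smul, smul_smul,
            inv_mul_cancel₀ hβ]
          module
        rw [this]
        exact A.add_mem (A.smul_mem _ hxA) (A.smul_mem _ hhA)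
      · intro hf
        rw [Submodule.mem_span_singleton] at hf
        obtain ⟨c, hc⟩ := hf
        have := S.combo_eq_zero (α := 0) (β := 1) (γ := -c)
          (by
            have h9 : (0:F) • S.e + (1:F) • S.f + (-c) • S.h = S.f - c • S.h := by module
            rw [h9, ← hc]; simp)
        simpa using this.2.1
  · left
    have hy : S.e + (α⁻¹ * β) • S.f ∈ A := by
      have : S.e + (α⁻¹ * β) • S.f = α⁻¹ • x + (-(α⁻¹ * γ)) • S.h := by
        rw [hx, smul_add, smul_add, smul_smul, smul_smul, smul_smul,
          inv_mul_cancel₀ hα]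
        module
      rw [this]
      exact A.add_mem (A.smul_mem _ hxA) (A.smul_mem _ hhA)
    refine ⟨α⁻¹ * β, key _ hy ?_⟩
    · intro hf
      rw [Submodule.mem_span_singleton] at hf
      obtain ⟨c, hc⟩ := hf
      have := S.combo_eq_zero (α := 1) (β := α⁻¹ * β) (γ := -c)
        (by
          have h9 : (1:F) • S.e + (α⁻¹ * β) • S.f + (-c) • S.h
              = (S.e + (α⁻¹ * β) • S.f) - c • S.h := by module
          rw [h9, ← hc]; simp)
      simpa using this.1

end HS

namespace HS
variable {F : Type*} [Field F] {H : Type*} [LieRing H] [LieAlgebra F H] (S : HS F H)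

theorem line_vx {v : H} (hv : v ∉ S.sh) :
    (lineAlg F v ≠ ⊥ ∧ lineAlg F v ≠ ⊤) ∧ lineAlg F v ≠ LieSubalgebra.lieSpan F H {S.h} := by
  have hv0 : v ≠ 0 := fun h0 => hv (h0 ▸ zero_mem _)
  have hfr : finrank F ((lineAlg F v : LieSubalgebra F H) : Submodule F H) = 1 := by
    rw [lineAlg_toSubmodule]; exact finrank_span_singleton hv0
  refine ⟨⟨ne_bot_of_finrank hfr one_ne_zero, S.ne_top_of_finrank hfr (by norm_num)⟩, ?_⟩
  intro heq
  apply hv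
  have hvv : v ∈ lineAlg F v := mem_lineAlg.mpr ⟨1, one_smul _ _⟩
  rw [heq, S.Z_eq, mem_lineAlg] at hvv
  obtain ⟨c, hc⟩ := hvv
  exact Submodule.mem_span_singleton.mpr ⟨c, hc⟩

theorem plane_vx {x : H} (hx : x ∉ S.sh) :
    (S.plane x ≠ ⊥ ∧ S.plane x ≠ ⊤) ∧ S.plane x ≠ LieSubalgebra.lieSpan F H {S.h} := by
  have hfr : finrank F ((S.plane x : LieSubalgebra F H) : Submodule F H) = 2 := by
    rw [plane_toSubmodule]; exact S.finrank_plane hx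
  refine ⟨⟨ne_bot_of_finrank hfr two_ne_zero, S.ne_top_of_finrank hfr (by norm_num)⟩, ?_⟩
  intro heq
  apply hx
  have hxx : x ∈ S.plane x := Submodule.subset_span (by simp)
  rw [heq, S.Z_eq, mem_lineAlg] at hxx
  obtain ⟨c, hc⟩ := hxx
  exact Submodule.mem_span_singleton.mpr ⟨c, hc⟩

theorem line_eq_Z {v : H} (hv0 : v ≠ 0) (hv : v ∈ S.sh) :
    lineAlg F v = LieSubalgebra.lieSpan F H {S.h} := by
  rw [Submodule.mem_span_singleton] at hv
  obtain ⟨c, rfl⟩ := hv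
  have hc : c ≠ 0 := fun h0 => hv0 (by simp [h0])
  rw [lineAlg_smul hc, S.Z_eq]

theorem P_spec {A : LieSubalgebra F H} (h1 : A ≠ ⊥) (h2 : A ≠ ⊤)
    (hZ : A ≠ LieSubalgebra.lieSpan F H {S.h}) :
    finrank F ((A : Submodule F H) ⊔ S.sh : Submodule F H) = 2 := by
  have := S.fd
  rcases S.finrank_mem_of_vertex h1 h2 with hfr | hfr
  · have hh : S.h ∉ (A : Submodule F H) := by
      intro hh
      apply hZ
      apply LieSubalgebra.toSubmodule_injective
      rw [S.Z_toSubmodule]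
      exact (Submodule.eq_of_le_of_finrank_eq
        (Submodule.span_le.mpr (Set.singleton_subset_iff.mpr hh))
        (by rw [S.finrank_sh, hfr])).symm
    have hinf : (A : Submodule F H) ⊓ S.sh = ⊥ := by
      rw [eq_bot_iff]
      intro x hx
      rw [Submodule.mem_inf] at hx
      obtain ⟨hxA, hxs⟩ := hx
      rw [Submodule.mem_span_singleton] at hxs
      obtain ⟨c, rfl⟩ := hxs
      rcases eq_or_ne c 0 with rfl | hc
      · simp
      · exact absurd (by
          have : S.h = c⁻¹ • (c • S.h) := by rw [smul_smul, inv_mul_cancel₀ hc, one_smul]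
          rw [this]
          exact Submodule.smul_mem _ _ hxA) hh
    have := Submodule.finrank_sup_add_finrank_inf_eq (A : Submodule F H) S.sh
    rw [hinf, hfr, S.finrank_sh, finrank_bot] at this
    omega
  · have hh : S.h ∈ A := S.h_mem_of_finrank2 A hfr
    have : (A : Submodule F H) ⊔ S.sh = (A : Submodule F H) :=
      sup_eq_left.mpr (Submodule.span_le.mpr (by simpa using hh))
    rw [this, hfr]

theorem adjacent_iff {A : LieSubalgebra F H} (h1 : A ≠ ⊥) (h2 : A ≠ ⊤)
    (hZ : A ≠ LieSubalgebra.lieSpan F H {S.h}) (B : LieSubalgebra F H) :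
    (B ≠ A ∧ A ⊔ B = ⊤) ↔ ¬ (B : Submodule F H) ≤ (A : Submodule F H) ⊔ S.sh := by
  have := S.fd
  have hP2 := S.P_spec h1 h2 hZ
  constructor
  · rintro ⟨hne, htop⟩ hle
    rw [S.sup_eq_top_iff] at htop
    have hPtop : (A : Submodule F H) ⊔ S.sh = ⊤ :=
      top_unique (htop ▸ sup_le (sup_le le_sup_left hle) le_sup_right)
    rw [hPtop, finrank_top, S.hdim] at hP2
    omega
  · intro hle
    have hBA : B ≠ A := by
      rintro rfl
      exact hle le_sup_left
    refine ⟨hBA, ?_⟩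
    rw [S.sup_eq_top_iff]
    have hlt : ((A : Submodule F H) ⊔ S.sh : Submodule F H)
        < ((A : Submodule F H) ⊔ S.sh) ⊔ (B : Submodule F H) := left_lt_sup.mpr hle
    have h4 := Submodule.finrank_lt_finrank_of_lt hlt
    have h5 : finrank F (((A : Submodule F H) ⊔ S.sh) ⊔ (B : Submodule F H) : Submodule F H)
        ≤ 3 := by
      rw [← S.hdim]; exact Submodule.finrank_le _
    have htop : ((A : Submodule F H) ⊔ S.sh) ⊔ (B : Submodule F H) = ⊤ :=
      Submodule.eq_top_of_finrank_eq (by rw [S.hdim]; omega)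
    rw [sup_right_comm]
    exact htop

theorem Z_not_adjacent (B : LieSubalgebra F H) (h1 : B ≠ ⊥) (h2 : B ≠ ⊤)
    (hZB : B ≠ LieSubalgebra.lieSpan F H {S.h}) :
    LieSubalgebra.lieSpan F H {S.h} ⊔ B ≠ ⊤ := by
  have := S.fd
  intro htop
  rw [S.sup_eq_top_iff, S.Z_toSubmodule, sup_right_comm, sup_idem,
    sup_comm S.sh ((B : Submodule F H))] at htop
  have := S.P_spec h1 h2 hZB
  rw [htop, finrank_top, S.hdim] at this
  omega

theorem exists_neighbor {A : LieSubalgebra F H} (h1 : A ≠ ⊥) (h2 : A ≠ ⊤)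
    (hZ : A ≠ LieSubalgebra.lieSpan F H {S.h}) :
    ∃ B : LieSubalgebra F H, (B ≠ ⊥ ∧ B ≠ ⊤) ∧ B ≠ LieSubalgebra.lieSpan F H {S.h}
      ∧ B ≠ A ∧ A ⊔ B = ⊤ := by
  have := S.fd
  have hP2 := S.P_spec h1 h2 hZ
  have hPh : S.h ∈ (A : Submodule F H) ⊔ S.sh :=
    Submodule.mem_sup_right (Submodule.mem_span_singleton_self _)
  have hv : ¬ (S.e ∈ ((A : Submodule F H) ⊔ S.sh : Submodule F H)
      ∧ S.f ∈ ((A : Submodule F H) ⊔ S.sh : Submodule F H)) := by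
    rintro ⟨he, hf⟩
    have : (⊤ : Submodule F H) ≤ (A : Submodule F H) ⊔ S.sh := by
      rw [← S.hspan]
      apply Submodule.span_le.mpr
      rintro z (rfl | rfl | rfl) <;> assumption
    rw [top_unique this, finrank_top, S.hdim] at hP2
    omega
  have hmain : ∃ v : H, v ∉ ((A : Submodule F H) ⊔ S.sh : Submodule F H) := by
    rcases not_and_or.mp hv with h | h
    exacts [⟨S.e, h⟩, ⟨S.f, h⟩]
  obtain ⟨v, hvP⟩ := hmain
  have hvs : v ∉ S.sh := fun hvs => hvP (Submodule.mem_sup_right hvs)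
  obtain ⟨⟨hb, ht⟩, hz⟩ := S.line_vx hvs
  have hadj := (S.adjacent_iff h1 h2 hZ (lineAlg F v)).mpr (by
    intro hle
    exact hvP (hle (Submodule.mem_span_singleton_self v)))
  exact ⟨lineAlg F v, ⟨hb, ht⟩, hz, hadj.1, hadj.2⟩

end HS

namespace HS
variable {F : Type*} [Field F] {H : Type*} [LieRing H] [LieAlgebra F H] (S : HS F H)

include S in
theorem finiteH [Finite F] : Finite H := by
  have := S.fd
  exact Module.finite_of_finite F

theorem nm1 (a b : F) : S.e + a • S.f + b • S.h ∉ S.sh := by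
  intro hm
  rw [Submodule.mem_span_singleton] at hm
  obtain ⟨c, hc⟩ := hm
  have h0 : (1 : F) • S.e + a • S.f + (b - c) • S.h
      = (S.e + a • S.f + b • S.h) - c • S.h := by module
  rw [← hc, sub_self] at h0
  exact one_ne_zero (S.combo_eq_zero h0).1

theorem nm2 (b : F) : S.f + b • S.h ∉ S.sh := by
  intro hm
  rw [Submodule.mem_span_singleton] at hm
  obtain ⟨c, hc⟩ := hm
  have h0 : (0 : F) • S.e + (1 : F) • S.f + (b - c) • S.h
      = (S.f + b • S.h) - c • S.h := by module
  rw [← hc, sub_self] at h0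
  exact one_ne_zero (S.combo_eq_zero h0).2.1

theorem nm3 (c : F) : S.e + c • S.f ∉ S.sh := by
  intro hm
  rw [Submodule.mem_span_singleton] at hm
  obtain ⟨c', hc⟩ := hm
  have h0 : (1 : F) • S.e + c • S.f + (0 - c') • S.h
      = (S.e + c • S.f) - c' • S.h := by module
  rw [← hc, sub_self] at h0
  exact one_ne_zero (S.combo_eq_zero h0).1

theorem nm4 : S.f ∉ S.sh := by
  intro hm
  rw [Submodule.mem_span_singleton] at hm
  obtain ⟨c', hc⟩ := hm
  have h0 : (0 : F) • S.e + (1 : F) • S.f + (0 - c') • S.h = S.f - c' • S.h := by module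
  have h1 : S.f - c' • S.h = 0 := by rw [← hc]; exact sub_self _
  exact one_ne_zero (S.combo_eq_zero (h0.trans h1)).2.1

theorem line_ne_plane {v x : H} (hv : v ≠ 0) (hx : x ∉ S.sh) :
    lineAlg F v ≠ S.plane x := by
  have := S.fd
  intro heq
  have h1 := congrArg (fun A : LieSubalgebra F H => finrank F (A : Submodule F H)) heq
  simp only [lineAlg_toSubmodule, plane_toSubmodule] at h1
  have h1' : finrank F (Submodule.span F {v}) = finrank F (Submodule.span F {x, S.h}) := h1
  rw [finrank_span_singleton hv, S.finrank_plane hx] at h1'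
  omega

theorem line_eq_line {v w : H} (heq : lineAlg F v = lineAlg F w) : ∃ c : F, c • w = v :=
  mem_lineAlg.mp (heq ▸ mem_lineAlg.mpr ⟨1, one_smul _ _⟩)

include S in
theorem plane_eq_plane {x y : H} (heq : S.plane x = S.plane y) :
    ∃ s t : F, s • y + t • S.h = x := by
  have hx : x ∈ S.plane x := Submodule.subset_span (by simp)
  rw [heq] at hx
  exact Submodule.mem_span_pair.mp hx

end HS

namespace HS
variable {F : Type*} [Field F] {H : Type*} [LieRing H] [LieAlgebra F H] (S : HS F H)

include S in
theorem card_vertices [Fintype F] :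
    Nat.card {A : LieSubalgebra F H //
      (A ≠ ⊥ ∧ A ≠ ⊤) ∧ A ≠ LieSubalgebra.lieSpan F H {S.h}}
      = (Fintype.card F + 1) ^ 2 := by
  classical
  have hfd := S.fd
  have hfin : Finite H := S.finiteH
  let φ : ((F × F) ⊕ F) ⊕ (F ⊕ Unit) → {A : LieSubalgebra F H //
      (A ≠ ⊥ ∧ A ≠ ⊤) ∧ A ≠ LieSubalgebra.lieSpan F H {S.h}} := fun i =>
    match i with
    | .inl (.inl (a, b)) => ⟨lineAlg F (S.e + a • S.f + b • S.h), S.line_vx (S.nm1 a b)⟩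
    | .inl (.inr b) => ⟨lineAlg F (S.f + b • S.h), S.line_vx (S.nm2 b)⟩
    | .inr (.inl c) => ⟨S.plane (S.e + c • S.f), S.plane_vx (S.nm3 c)⟩
    | .inr (.inr _) => ⟨S.plane S.f, S.plane_vx S.nm4⟩
  have hbij : Function.Bijective φ := by
    constructor
    · intro i j hij
      rcases i with (⟨a, b⟩ | b) | (c | u)
      · rcases j with (⟨a', b'⟩ | b') | (c' | u')
        · have hl : lineAlg F (S.e + a • S.f + b • S.h)
              = lineAlg F (S.e + a' • S.f + b' • S.h) := congrArg Subtype.val hij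
          obtain ⟨k, hk⟩ := line_eq_line hl
          have h0 : (k - 1) • S.e + (k * a' - a) • S.f + (k * b' - b) • S.h
              = k • (S.e + a' • S.f + b' • S.h) - (S.e + a • S.f + b • S.h) := by module
          rw [hk, sub_self] at h0
          obtain ⟨h1, h2, h3⟩ := S.combo_eq_zero h0
          have hk1 : k = 1 := by linear_combination h1
          have ha : a = a' := by linear_combination -h2 + a' * h1
          have hb : b = b' := by linear_combination -h3 + b' * h1
          rw [ha, hb]
        · exfalso
          have hl : lineAlg F (S.e + a • S.f + b • S.h)
              = lineAlg F (S.f + b' • S.h) := congrArg Subtype.val hij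
          obtain ⟨k, hk⟩ := line_eq_line hl
          have h0 : (-1 : F) • S.e + (k - a) • S.f + (k * b' - b) • S.h
              = k • (S.f + b' • S.h) - (S.e + a • S.f + b • S.h) := by module
          rw [hk, sub_self] at h0
          obtain ⟨h1, -, -⟩ := S.combo_eq_zero h0
          exact one_ne_zero (by linear_combination -h1)
        · exact absurd (congrArg Subtype.val hij)
            (S.line_ne_plane (fun h0 => S.nm1 a b (h0 ▸ zero_mem _)) (S.nm3 c'))
        · exact absurd (congrArg Subtype.val hij)
            (S.line_ne_plane (fun h0 => S.nm1 a b (h0 ▸ zero_mem _)) S.nm4)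
      · rcases j with (⟨a', b'⟩ | b') | (c' | u')
        · exfalso
          have hl : lineAlg F (S.f + b • S.h)
              = lineAlg F (S.e + a' • S.f + b' • S.h) := congrArg Subtype.val hij
          obtain ⟨k, hk⟩ := line_eq_line hl
          have h0 : (k - 0) • S.e + (k * a' - 1) • S.f + (k * b' - b) • S.h
              = k • (S.e + a' • S.f + b' • S.h) - (S.f + b • S.h) := by module
          rw [hk, sub_self] at h0
          obtain ⟨h1, h2, -⟩ := S.combo_eq_zero h0
          exact one_ne_zero (by linear_combination -h2 + a' * h1)
        · have hl : lineAlg F (S.f + b • S.h)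
              = lineAlg F (S.f + b' • S.h) := congrArg Subtype.val hij
          obtain ⟨k, hk⟩ := line_eq_line hl
          have h0 : (0 : F) • S.e + (k - 1) • S.f + (k * b' - b) • S.h
              = k • (S.f + b' • S.h) - (S.f + b • S.h) := by module
          rw [hk, sub_self] at h0
          obtain ⟨-, h2, h3⟩ := S.combo_eq_zero h0
          have hb : b = b' := by linear_combination -h3 + b' * h2
          rw [hb]
        · exact absurd (congrArg Subtype.val hij)
            (S.line_ne_plane (fun h0 => S.nm2 b (h0 ▸ zero_mem _)) (S.nm3 c'))
        · exact absurd (congrArg Subtype.val hij)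
            (S.line_ne_plane (fun h0 => S.nm2 b (h0 ▸ zero_mem _)) S.nm4)
      · rcases j with (⟨a', b'⟩ | b') | (c' | u')
        · exact absurd (congrArg Subtype.val hij).symm
            (S.line_ne_plane (fun h0 => S.nm1 a' b' (h0 ▸ zero_mem _)) (S.nm3 c))
        · exact absurd (congrArg Subtype.val hij).symm
            (S.line_ne_plane (fun h0 => S.nm2 b' (h0 ▸ zero_mem _)) (S.nm3 c))
        · have hp : S.plane (S.e + c • S.f) = S.plane (S.e + c' • S.f) :=
            congrArg Subtype.val hij
          obtain ⟨s, t, hst⟩ := S.plane_eq_plane hp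
          have h0 : (s - 1) • S.e + (s * c' - c) • S.f + (t - 0) • S.h
              = (s • (S.e + c' • S.f) + t • S.h) - (S.e + c • S.f) := by module
          rw [hst, sub_self] at h0
          obtain ⟨h1, h2, -⟩ := S.combo_eq_zero h0
          have hc : c = c' := by linear_combination -h2 + c' * h1
          rw [hc]
        · exfalso
          have hp : S.plane (S.e + c • S.f) = S.plane S.f := congrArg Subtype.val hij
          obtain ⟨s, t, hst⟩ := S.plane_eq_plane hp
          have h0 : (-1 : F) • S.e + (s - c) • S.f + (t - 0) • S.h
              = (s • S.f + t • S.h) - (S.e + c • S.f) := by module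
          rw [hst, sub_self] at h0
          obtain ⟨h1, -, -⟩ := S.combo_eq_zero h0
          exact one_ne_zero (by linear_combination -h1)
      · rcases j with (⟨a', b'⟩ | b') | (c' | u')
        · exact absurd (congrArg Subtype.val hij).symm
            (S.line_ne_plane (fun h0 => S.nm1 a' b' (h0 ▸ zero_mem _)) S.nm4)
        · exact absurd (congrArg Subtype.val hij).symm
            (S.line_ne_plane (fun h0 => S.nm2 b' (h0 ▸ zero_mem _)) S.nm4)
        · exfalso
          have hp : S.plane S.f = S.plane (S.e + c' • S.f) := congrArg Subtype.val hij
          obtain ⟨s, t, hst⟩ := S.plane_eq_plane hp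
          have h0 : (s - 0) • S.e + (s * c' - 1) • S.f + (t - 0) • S.h
              = (s • (S.e + c' • S.f) + t • S.h) - S.f := by module
          have h1 : (s • (S.e + c' • S.f) + t • S.h) - S.f = 0 := by
            rw [hst]; exact sub_self _
          obtain ⟨h2, h3, -⟩ := S.combo_eq_zero (h0.trans h1)
          exact one_ne_zero (by linear_combination -h3 + c' * h2)
        · rfl
    · rintro ⟨A, ⟨⟨hb, ht⟩, hz⟩⟩
      rcases S.finrank_mem_of_vertex hb ht with h1 | h2
      · obtain ⟨v, hv0, rfl⟩ := S.line_norm h1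
        obtain ⟨α, β, γ, hv⟩ := S.exists_combo v
        rcases eq_or_ne α 0 with rfl | hα
        · rcases eq_or_ne β 0 with rfl | hβ
          · exfalso
            apply hz
            apply S.line_eq_Z hv0
            rw [Submodule.mem_span_singleton]
            exact ⟨γ, by rw [hv]; module⟩
          · refine ⟨.inl (.inr (β⁻¹ * γ)), ?_⟩
            apply Subtype.ext
            show lineAlg F (S.f + (β⁻¹ * γ) • S.h) = lineAlg F v
            have hvv : S.f + (β⁻¹ * γ) • S.h = β⁻¹ • v := by
              rw [hv, smul_add, smul_add, smul_smul, smul_smul, smul_smul,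
                inv_mul_cancel₀ hβ]
              module
            rw [hvv, lineAlg_smul (inv_ne_zero hβ)]
        · refine ⟨.inl (.inl (α⁻¹ * β, α⁻¹ * γ)), ?_⟩
          apply Subtype.ext
          show lineAlg F (S.e + (α⁻¹ * β) • S.f + (α⁻¹ * γ) • S.h) = lineAlg F v
          have hvv : S.e + (α⁻¹ * β) • S.f + (α⁻¹ * γ) • S.h = α⁻¹ • v := by
            rw [hv, smul_add, smul_add, smul_smul, smul_smul, smul_smul,
              inv_mul_cancel₀ hα]
            module
          rw [hvv, lineAlg_smul (inv_ne_zero hα)]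
      · rcases S.plane_norm h2 with ⟨c, rfl⟩ | rfl
        · exact ⟨.inr (.inl c), rfl⟩
        · exact ⟨.inr (.inr ()), rfl⟩
  rw [← Nat.card_eq_of_bijective φ hbij]
  simp only [Nat.card_eq_fintype_card, Fintype.card_sum, Fintype.card_prod,
    Fintype.card_unit]
  ring

end HS

namespace HS
variable {F : Type*} [Field F] {H : Type*} [LieRing H] [LieAlgebra F H] (S : HS F H)

theorem not_mem_sh_add {x : H} (hx : x ∉ S.sh) (b : F) : x + b • S.h ∉ S.sh := by
  intro hm
  rw [Submodule.mem_span_singleton] at hm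
  obtain ⟨c, hc⟩ := hm
  exact hx (Submodule.mem_span_singleton.mpr ⟨c - b, by rw [sub_smul, hc]; module⟩)

include S in
theorem card_le_plane [Fintype F] {x : H} (hx : x ∉ S.sh) :
    Nat.card {B : LieSubalgebra F H //
      ((B ≠ ⊥ ∧ B ≠ ⊤) ∧ B ≠ LieSubalgebra.lieSpan F H {S.h}) ∧
        (B : Submodule F H) ≤ Submodule.span F {x, S.h}}
      = Fintype.card F + 1 := by
  classical
  have hfd := S.fd
  have hfin : Finite H := S.finiteH
  let ψ : F ⊕ Unit → {B : LieSubalgebra F H //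
      ((B ≠ ⊥ ∧ B ≠ ⊤) ∧ B ≠ LieSubalgebra.lieSpan F H {S.h}) ∧
        (B : Submodule F H) ≤ Submodule.span F {x, S.h}} := fun i =>
    match i with
    | .inl b => ⟨lineAlg F (x + b • S.h), S.line_vx (S.not_mem_sh_add hx b), by
        rw [lineAlg_toSubmodule]
        apply Submodule.span_le.mpr
        rintro z rfl
        exact add_mem (Submodule.subset_span (by simp))
          (Submodule.smul_mem _ _ (Submodule.subset_span (by simp)))⟩
    | .inr _ => ⟨S.plane x, S.plane_vx hx, by rw [plane_toSubmodule]⟩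
  have hbij : Function.Bijective ψ := by
    constructor
    · rintro (b | u) (b' | u') hij
      · have hl : lineAlg F (x + b • S.h) = lineAlg F (x + b' • S.h) :=
          congrArg Subtype.val hij
        obtain ⟨k, hk⟩ := line_eq_line hl
        have h0 : (k - 1) • x + (k * b' - b) • S.h
            = k • (x + b' • S.h) - (x + b • S.h) := by module
        rw [hk, sub_self] at h0
        obtain ⟨h1, h2⟩ := S.pair_indep hx h0
        have hb : b = b' := by linear_combination -h2 + b' * h1
        rw [hb]
      · exact absurd (congrArg Subtype.val hij)
          (S.line_ne_plane (fun h0 => S.not_mem_sh_add hx b (h0 ▸ zero_mem _)) hx)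
      · exact absurd (congrArg Subtype.val hij).symm
          (S.line_ne_plane (fun h0 => S.not_mem_sh_add hx b' (h0 ▸ zero_mem _)) hx)
      · rfl
    · rintro ⟨B, ⟨⟨⟨hb, ht⟩, hz⟩, hle⟩⟩
      rcases S.finrank_mem_of_vertex hb ht with h1 | h2
      · obtain ⟨v, hv0, rfl⟩ := S.line_norm h1
        have hvP : v ∈ Submodule.span F {x, S.h} :=
          hle (Submodule.mem_span_singleton_self v)
        obtain ⟨s, t, hst⟩ := Submodule.mem_span_pair.mp hvP
        rcases eq_or_ne s 0 with rfl | hs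
        · exfalso
          apply hz
          apply S.line_eq_Z hv0
          exact Submodule.mem_span_singleton.mpr ⟨t, by rw [← hst]; module⟩
        · refine ⟨.inl (s⁻¹ * t), ?_⟩
          apply Subtype.ext
          show lineAlg F (x + (s⁻¹ * t) • S.h) = lineAlg F v
          have hvv : x + (s⁻¹ * t) • S.h = s⁻¹ • v := by
            rw [← hst, smul_add, smul_smul, smul_smul, inv_mul_cancel₀ hs]
            module
          rw [hvv, lineAlg_smul (inv_ne_zero hs)]
      · refine ⟨.inr (), ?_⟩
        apply Subtype.ext
        show S.plane x = B
        apply LieSubalgebra.toSubmodule_injective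
        rw [plane_toSubmodule]
        exact (Submodule.eq_of_le_of_finrank_eq hle
          (by rw [h2, S.finrank_plane hx])).symm
  rw [← Nat.card_eq_of_bijective ψ hbij]
  simp [Nat.card_eq_fintype_card]

end HS

namespace HS
variable {F : Type*} [Field F] {H : Type*} [LieRing H] [LieAlgebra F H] (S : HS F H)

include S in
theorem degree [Fintype F] {A : LieSubalgebra F H} (h1 : A ≠ ⊥) (h2 : A ≠ ⊤)
    (hZ : A ≠ LieSubalgebra.lieSpan F H {S.h}) :
    Nat.card {B : LieSubalgebra F H //
      ((B ≠ ⊥ ∧ B ≠ ⊤) ∧ B ≠ LieSubalgebra.lieSpan F H {S.h}) ∧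
        B ≠ A ∧ A ⊔ B = ⊤} = Fintype.card F ^ 2 + Fintype.card F := by
  classical
  have hfd := S.fd
  have hfin : Finite H := S.finiteH
  have hfinL : Finite (LieSubalgebra F H) :=
    Finite.of_injective (fun A : LieSubalgebra F H => (A : Set H)) SetLike.coe_injective
  have hP2 := S.P_spec h1 h2 hZ
  have hsle : S.sh ≤ (A : Submodule F H) ⊔ S.sh := le_sup_right
  have hslt : S.sh < (A : Submodule F H) ⊔ S.sh := by
    refine lt_of_le_of_ne hsle ?_
    intro heq
    rw [← heq, S.finrank_sh] at hP2
    omega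
  obtain ⟨x, hxP, hxs⟩ := SetLike.exists_of_lt hslt
  have hPx : (A : Submodule F H) ⊔ S.sh = Submodule.span F {x, S.h} := by
    refine (Submodule.eq_of_le_of_finrank_eq (Submodule.span_le.mpr ?_)
      (by rw [S.finrank_plane hxs, hP2])).symm
    rintro z (rfl | rfl)
    · exact hxP
    · exact Submodule.mem_sup_right (Submodule.mem_span_singleton_self _)
  have hcongr : Nat.card {B : LieSubalgebra F H //
      ((B ≠ ⊥ ∧ B ≠ ⊤) ∧ B ≠ LieSubalgebra.lieSpan F H {S.h}) ∧
        B ≠ A ∧ A ⊔ B = ⊤}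
      = Nat.card {B : LieSubalgebra F H //
      ((B ≠ ⊥ ∧ B ≠ ⊤) ∧ B ≠ LieSubalgebra.lieSpan F H {S.h}) ∧
        ¬ (B : Submodule F H) ≤ Submodule.span F {x, S.h}} := by
    apply Nat.card_congr
    apply Equiv.subtypeEquivRight
    intro B
    rw [← hPx]
    exact and_congr_right fun _ => S.adjacent_iff h1 h2 hZ B
  rw [hcongr]
  have hsplit := card_split
    (fun B : LieSubalgebra F H =>
      (B ≠ ⊥ ∧ B ≠ ⊤) ∧ B ≠ LieSubalgebra.lieSpan F H {S.h})
    (fun B : LieSubalgebra F H => (B : Submodule F H) ≤ Submodule.span F {x, S.h})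
  rw [S.card_vertices, S.card_le_plane hxs] at hsplit
  have hexp : (Fintype.card F + 1) ^ 2
      = Fintype.card F ^ 2 + 2 * Fintype.card F + 1 := by ring
  omega

end HS

/-- The comaximal graph of the Heisenberg algebra `H₃(F_q)` with its unique
isolated vertex (the center `Z = span(h)`) removed is `(q²+q)`-regular on
`(q+1)²` vertices. -/
theorem heisenberg_comaximal_star_regular
    (F : Type*) [Field F] [Fintype F] (q : ℕ) (hq : Fintype.card F = q)
    (H : Type*) [LieRing H] [LieAlgebra F H]
    (e f h : H) (hspan : Submodule.span F {e, f, h} = ⊤)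
    (hdim : finrank F H = 3)
    (hef : ⁅e, f⁆ = h) (heh : ⁅e, h⁆ = 0) (hfh : ⁅f, h⁆ = 0) :
    -- the center is the unique isolated vertex of Γ(H)
    (∀ A : LieSubalgebra F H, A ≠ ⊥ → A ≠ ⊤ →
        ((∀ B : LieSubalgebra F H, B ≠ ⊥ → B ≠ ⊤ → B ≠ A → A ⊔ B ≠ ⊤) ↔
          A = LieSubalgebra.lieSpan F H {h})) ∧
    -- removing it leaves (q+1)² vertices
    Nat.card {A : LieSubalgebra F H //
        (A ≠ ⊥ ∧ A ≠ ⊤) ∧ A ≠ LieSubalgebra.lieSpan F H {h}} = (q + 1) ^ 2 ∧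
    -- each remaining vertex has degree q² + q
    (∀ A : LieSubalgebra F H, A ≠ ⊥ → A ≠ ⊤ →
        A ≠ LieSubalgebra.lieSpan F H {h} →
        Nat.card {B : LieSubalgebra F H //
          ((B ≠ ⊥ ∧ B ≠ ⊤) ∧ B ≠ LieSubalgebra.lieSpan F H {h}) ∧
            B ≠ A ∧ A ⊔ B = ⊤} = q ^ 2 + q) := by
  let S : HS F H := ⟨e, f, h, hspan, hdim, hef, heh, hfh⟩
  refine ⟨?_, ?_, ?_⟩
  · intro A h1 h2
    constructor
    · intro hiso
      by_contra hAZ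
      obtain ⟨B, ⟨hb, ht⟩, hz, hBA, hsup⟩ := S.exists_neighbor h1 h2 hAZ
      exact hiso B hb ht hBA hsup
    · intro hAZ B hb ht hBA
      subst hAZ
      exact S.Z_not_adjacent B hb ht hBA
  · have := S.card_vertices
    rw [hq] at this
    exact this
  · intro A h1 h2 hZ
    have := S.degree h1 h2 hZ
    rw [hq] at this
    exact this
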